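/- If Z is statistically independent of the pair (X, Y), then the PLMMSE estimator of X from (Y, Z) equals the LMMSE estimator of X from Y: X̂ = Γ_{XY} Γ_{YY}† (Y − E[Y]) + E[X]. -/

import Mathlib

open MeasureTheory Matrix ProbabilityTheory

noncomputable def condExpVec {Ω : Type} {mΩ : MeasurableSpace Ω} (μ : Measure Ω)
    (m : MeasurableSpace Ω) {N : ℕ} (Y : Ω → Fin N → ℝ) : Ω → Fin N → ℝ :=
  fun ω i => (μ[(fun ω' => Y ω' i)|m]) ω

noncomputable def meanVec {Ω : Type} {mΩ : MeasurableSpace Ω} (μ : Measure Ω)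
    {N : ℕ} (Y : Ω → Fin N → ℝ) : Fin N → ℝ := fun i => ∫ ω, Y ω i ∂μ

noncomputable def crossCov {Ω : Type} {mΩ : MeasurableSpace Ω} (μ : Measure Ω)
    {M N : ℕ} (X : Ω → Fin M → ℝ) (Y : Ω → Fin N → ℝ) : Matrix (Fin M) (Fin N) ℝ :=
  Matrix.of fun i j => ∫ ω, (X ω i - meanVec μ X i) * (Y ω j - meanVec μ Y j) ∂μ

/-- The residual `Y - E[Y|m]` (the innovation `Ỹ`). -/
noncomputable def resid {Ω : Type} {mΩ : MeasurableSpace Ω} (μ : Measure Ω)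
    (m : MeasurableSpace Ω) {N : ℕ} (Y : Ω → Fin N → ℝ) : Ω → Fin N → ℝ :=
  fun ω => Y ω - condExpVec (mΩ := mΩ) μ m Y ω

def IsMoorePenrose {m n : ℕ} (A : Matrix (Fin m) (Fin n) ℝ) (P : Matrix (Fin n) (Fin m) ℝ) : Prop :=
  A * P * A = A ∧ P * A * P = P ∧ (A * P)ᵀ = A * P ∧ (P * A)ᵀ = P * A

/-- The PLMMSE estimator `X̂ = Γ_{XỸ} Γ_{ỸỸ}† Ỹ + E[X|Z]`, where `P` is a matrix
playing the role of the Moore–Penrose pseudo-inverse `Γ_{ỸỸ}†`. -/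
noncomputable def plmmse {Ω : Type} {mΩ : MeasurableSpace Ω} (μ : Measure Ω)
    {M N Q : ℕ} (X : Ω → Fin M → ℝ) (Y : Ω → Fin N → ℝ) (Z : Ω → Fin Q → ℝ)
    (P : Matrix (Fin N) (Fin N) ℝ) : Ω → Fin M → ℝ :=
  fun ω =>
    (crossCov μ X (resid μ (MeasurableSpace.comap Z inferInstance) Y) * P).mulVec
      (resid μ (MeasurableSpace.comap Z inferInstance) Y ω) +
    condExpVec μ (MeasurableSpace.comap Z inferInstance) X ω

lemma mp_unique {m n : ℕ} (A : Matrix (Fin m) (Fin n) ℝ) (P P' : Matrix (Fin n) (Fin m) ℝ)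
    (h : IsMoorePenrose A P) (h' : IsMoorePenrose A P') : P = P' := by
  obtain ⟨h1, h2, h3, h4⟩ := h
  obtain ⟨h1', h2', h3', h4'⟩ := h'
  have hAt : Aᵀ = Aᵀ * (A * P') := by
    conv_lhs => rw [← h1']
    rw [show A * P' * A = (A * P') * A from rfl, Matrix.transpose_mul, h3']
  have hAt2 : Aᵀ = (P * A) * Aᵀ := by
    conv_lhs => rw [← h1]
    rw [show A * P * A = A * (P * A) from by rw [Matrix.mul_assoc], Matrix.transpose_mul, h4]
  have hAP : A * P = A * P' := by
    calc A * P = (A * P)ᵀ := h3.symm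
    _ = Pᵀ * Aᵀ := Matrix.transpose_mul _ _
    _ = Pᵀ * (Aᵀ * (A * P')) := by rw [← hAt]
    _ = (Pᵀ * Aᵀ) * (A * P') := by rw [Matrix.mul_assoc]
    _ = (A * P)ᵀ * (A * P') := by rw [Matrix.transpose_mul]
    _ = (A * P) * (A * P') := by rw [h3]
    _ = (A * P * A) * P' := by rw [Matrix.mul_assoc, Matrix.mul_assoc, Matrix.mul_assoc]
    _ = A * P' := by rw [h1]
  have hPA : P' * A = P * A := by
    calc P' * A = (P' * A)ᵀ := h4'.symm
    _ = Aᵀ * P'ᵀ := Matrix.transpose_mul _ _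
    _ = ((P * A) * Aᵀ) * P'ᵀ := by rw [← hAt2]
    _ = (P * A) * (Aᵀ * P'ᵀ) := by rw [Matrix.mul_assoc]
    _ = (P * A) * (P' * A)ᵀ := by rw [Matrix.transpose_mul]
    _ = (P * A) * (P' * A) := by rw [h4']
    _ = P * (A * P' * A) := by rw [Matrix.mul_assoc, Matrix.mul_assoc]
    _ = P * A := by rw [h1']
  calc P = P * A * P := h2.symm
  _ = P' * A * P := by rw [← hPA]
  _ = P' * (A * P') := by rw [Matrix.mul_assoc, hAP]
  _ = P' := by rw [← Matrix.mul_assoc, h2']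

lemma condexp_const_of_indep {Ω : Type} [mΩ : MeasurableSpace Ω] (μ : Measure Ω)
    [IsProbabilityMeasure μ] {Q : ℕ} (Z : Ω → Fin Q → ℝ) (hZm : Measurable Z)
    (f : Ω → ℝ) (hf : Measurable f) (hind : IndepFun f Z μ) :
    μ[f | MeasurableSpace.comap Z inferInstance] =ᵐ[μ] fun _ => ∫ ω, f ω ∂μ := by
  have hle₂ : MeasurableSpace.comap Z inferInstance ≤ mΩ := hZm.comap_le
  haveI : SigmaFinite (μ.trim hle₂) := by infer_instance
  exact condExp_indep_eq hf.comap_le hle₂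
    (Measurable.stronglyMeasurable (fun s hs => ⟨s, hs, rfl⟩)) hind

/-- if `Z` is independent of the pair `(X, Y)`, the PLMMSE estimator
equals the LMMSE estimator of `X` from `Y`. -/
theorem stmt8 {Ω : Type} [MeasurableSpace Ω] (μ : Measure Ω) [IsProbabilityMeasure μ]
    {M N Q : ℕ} (X : Ω → Fin M → ℝ) (Y : Ω → Fin N → ℝ) (Z : Ω → Fin Q → ℝ)
    (hXm : Measurable X) (hYm : Measurable Y) (hZm : Measurable Z)
    (hX2 : ∀ i, MemLp (fun ω => X ω i) 2 μ) (hY2 : ∀ i, MemLp (fun ω => Y ω i) 2 μ)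
    (hind : IndepFun (fun ω => (X ω, Y ω)) Z μ)
    (P : Matrix (Fin N) (Fin N) ℝ)
    (hP : IsMoorePenrose
      (crossCov μ (resid μ (MeasurableSpace.comap Z inferInstance) Y)
        (resid μ (MeasurableSpace.comap Z inferInstance) Y)) P)
    (P' : Matrix (Fin N) (Fin N) ℝ) (hP' : IsMoorePenrose (crossCov μ Y Y) P') :
    plmmse μ X Y Z P =ᵐ[μ] fun ω =>
      (crossCov μ X Y * P').mulVec (Y ω - meanVec μ Y) + meanVec μ X := by
  have hmZ : True := trivial
  have hYind : ∀ j, IndepFun (fun ω => Y ω j) Z μ := fun j =>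
    hind.comp ((measurable_pi_apply j).comp measurable_snd) measurable_id
  have hXind : ∀ i, IndepFun (fun ω => X ω i) Z μ := fun i =>
    hind.comp ((measurable_pi_apply i).comp measurable_fst) measurable_id
  have hYc : ∀ j, (μ[(fun ω => Y ω j)|MeasurableSpace.comap Z inferInstance]) =ᵐ[μ] fun _ => meanVec μ Y j := fun j =>
    condexp_const_of_indep μ Z hZm _ ((measurable_pi_apply j).comp hYm) (hYind j)
  have hXc : ∀ i, (μ[(fun ω => X ω i)|MeasurableSpace.comap Z inferInstance]) =ᵐ[μ] fun _ => meanVec μ X i := fun i =>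
    condexp_const_of_indep μ Z hZm _ ((measurable_pi_apply i).comp hXm) (hXind i)
  have hYres : ∀ᵐ ω ∂μ, resid μ (MeasurableSpace.comap Z inferInstance) Y ω = Y ω - meanVec μ Y := by
    filter_upwards [ae_all_iff.2 hYc] with ω hω
    funext j
    simp [resid, condExpVec, hω j]
  have hXce : ∀ᵐ ω ∂μ, condExpVec μ (MeasurableSpace.comap Z inferInstance) X ω = meanVec μ X := by
    filter_upwards [ae_all_iff.2 hXc] with ω hω
    funext i
    simp [condExpVec, hω i]
  have hmres : ∀ j, meanVec μ (resid μ (MeasurableSpace.comap Z inferInstance) Y) j = 0 := by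
    intro j
    have h1 : (fun ω => resid μ (MeasurableSpace.comap Z inferInstance) Y ω j) =ᵐ[μ] fun ω => Y ω j - meanVec μ Y j :=
      hYres.mono fun ω h => by simp [h]
    rw [show meanVec μ (resid μ (MeasurableSpace.comap Z inferInstance) Y) j = ∫ ω, resid μ (MeasurableSpace.comap Z inferInstance) Y ω j ∂μ from rfl,
      integral_congr_ae h1,
      integral_sub ((hY2 j).integrable one_le_two) (integrable_const _), integral_const]
    simp [meanVec]
  have hccXY : crossCov μ X (resid μ (MeasurableSpace.comap Z inferInstance) Y) = crossCov μ X Y := by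
    ext i j
    simp only [crossCov, Matrix.of_apply]
    refine integral_congr_ae ?_
    filter_upwards [hYres] with ω hω
    rw [hmres j, hω]
    simp
  have hccYY : crossCov μ (resid μ (MeasurableSpace.comap Z inferInstance) Y) (resid μ (MeasurableSpace.comap Z inferInstance) Y) = crossCov μ Y Y := by
    ext i j
    simp only [crossCov, Matrix.of_apply]
    refine integral_congr_ae ?_
    filter_upwards [hYres] with ω hω
    rw [hmres i, hmres j, hω]
    simp
  have hPP : P = P' := mp_unique (crossCov μ Y Y) P P' (by rw [← hccYY]; exact hP) hP'
  filter_upwards [hYres, hXce] with ω h1 h2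
  simp only [plmmse, hccXY, hPP, h1, h2]
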